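/- Expected value of multilinear extension with dependent-but-dominated marginals (Lemma 3.7 of Calinescu et al., restricted form): let h : 2^N → ℝ≥0 be monotone submodular, and partition N into groups N = ⊎_{i} N_i. Let R be a random set containing at most one element from each group N_i, where within each group element e is chosen with probability x_e (so Σ_{e ∈ N_i} x_e ≤ 1), independently across groups. Then E[h(R)] ≥ H(x), where H is the multilinear extension of h. -/

import Mathlib

open Finset
set_option linter.unusedSectionVars false
set_option maxHeartbeats 1000000

section Aux
variable {N : Type*} [Fintype N] [DecidableEq N]

lemma aux_marginal_subadd (h : Finset N → ℝ)
    (hmono : ∀ U V : Finset N, U ⊆ V → h U ≤ h V)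
    (hsub : ∀ U V : Finset N, h U + h V ≥ h (U ∪ V) + h (U ∩ V))
    (A : Finset N) (T : Finset N) :
    h (T ∪ A) ≤ h A + ∑ e ∈ T, (h ({e} ∪ A) - h A) := by
  induction T using Finset.induction_on with
  | empty => simp
  | @insert a T ha ih =>
    have h1 : h ((T ∪ A) ∪ ({a} ∪ A)) + h ((T ∪ A) ∩ ({a} ∪ A)) ≤ h (T ∪ A) + h ({a} ∪ A) :=
      hsub _ _
    have h2 : h A ≤ h ((T ∪ A) ∩ ({a} ∪ A)) :=
      hmono _ _ (subset_inter (subset_union_right) (subset_union_right))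
    have h3 : insert a T ∪ A = (T ∪ A) ∪ ({a} ∪ A) := by
      ext e; simp [Finset.mem_insert]
    rw [h3, Finset.sum_insert ha]
    linarith

lemma aux_prodsum_one (x : N → ℝ) (G : Finset N) :
    ∑ T ∈ G.powerset, (∏ e ∈ T, x e) * ∏ e ∈ G \ T, (1 - x e) = 1 := by
  rw [← Finset.prod_add]
  simp

lemma aux_expect_linear (x : N → ℝ) (c : N → ℝ) (G : Finset N) :
    ∑ T ∈ G.powerset, ((∏ e ∈ T, x e) * ∏ e ∈ G \ T, (1 - x e)) * (∑ e ∈ T, c e)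
      = ∑ e ∈ G, x e * c e := by
  induction G using Finset.induction_on with
  | empty => simp
  | @insert a G ha ih =>
    rw [Finset.sum_powerset_insert ha, Finset.sum_insert ha, ← ih]
    have key1 : ∀ T ∈ G.powerset,
        ((∏ e ∈ T, x e) * ∏ e ∈ insert a G \ T, (1 - x e)) * (∑ e ∈ T, c e)
        = (1 - x a) * (((∏ e ∈ T, x e) * ∏ e ∈ G \ T, (1 - x e)) * (∑ e ∈ T, c e)) := by
      intro T hT
      rw [Finset.mem_powerset] at hT
      have : insert a G \ T = insert a (G \ T) := by
        rw [Finset.insert_sdiff_of_notMem _ (fun hc => ha (hT hc))]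
      rw [this, Finset.prod_insert (by simp [ha])]
      ring
    have key2 : ∀ T ∈ G.powerset,
        ((∏ e ∈ insert a T, x e) * ∏ e ∈ insert a G \ insert a T, (1 - x e)) *
          (∑ e ∈ insert a T, c e)
        = x a * (((∏ e ∈ T, x e) * ∏ e ∈ G \ T, (1 - x e)) * (c a + ∑ e ∈ T, c e)) := by
      intro T hT
      rw [Finset.mem_powerset] at hT
      have haT : a ∉ T := fun hc => ha (hT hc)
      have : insert a G \ insert a T = G \ T := by
        ext e; by_cases he : e = a <;> simp [he, ha, haT] <;> tauto
      rw [this, Finset.prod_insert haT, Finset.sum_insert haT]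
      ring
    rw [Finset.sum_congr rfl key1, Finset.sum_congr rfl key2, ← Finset.mul_sum, ← Finset.mul_sum]
    have expand : ∑ T ∈ G.powerset,
        ((∏ e ∈ T, x e) * ∏ e ∈ G \ T, (1 - x e)) * (c a + ∑ e ∈ T, c e)
        = c a * (∑ T ∈ G.powerset, (∏ e ∈ T, x e) * ∏ e ∈ G \ T, (1 - x e))
          + ∑ T ∈ G.powerset, ((∏ e ∈ T, x e) * ∏ e ∈ G \ T, (1 - x e)) * (∑ e ∈ T, c e) := by
      rw [Finset.mul_sum, ← Finset.sum_add_distrib]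
      exact Finset.sum_congr rfl (fun T _ => by ring)
    rw [expand, aux_prodsum_one, ih]
    ring


lemma aux_key (h : Finset N → ℝ)
    (hmono : ∀ U V : Finset N, U ⊆ V → h U ≤ h V)
    (hsub : ∀ U V : Finset N, h U + h V ≥ h (U ∪ V) + h (U ∩ V))
    (x : N → ℝ) (hx : ∀ e, 0 ≤ x e ∧ x e ≤ 1)
    (G : Finset N) (A : Finset N) :
    ∑ T ∈ G.powerset, ((∏ e ∈ T, x e) * ∏ e ∈ G \ T, (1 - x e)) * h (T ∪ A)
      ≤ (1 - ∑ e ∈ G, x e) * h A + ∑ e ∈ G, x e * h ({e} ∪ A) := by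
  have hP : ∀ T ∈ G.powerset, 0 ≤ (∏ e ∈ T, x e) * ∏ e ∈ G \ T, (1 - x e) := by
    intro T _
    exact mul_nonneg (Finset.prod_nonneg fun e _ => (hx e).1)
      (Finset.prod_nonneg fun e _ => by linarith [(hx e).2])
  have step1 : ∑ T ∈ G.powerset, ((∏ e ∈ T, x e) * ∏ e ∈ G \ T, (1 - x e)) * h (T ∪ A)
      ≤ ∑ T ∈ G.powerset, ((∏ e ∈ T, x e) * ∏ e ∈ G \ T, (1 - x e)) *
          (h A + ∑ e ∈ T, (h ({e} ∪ A) - h A)) :=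
    Finset.sum_le_sum fun T hT =>
      mul_le_mul_of_nonneg_left (aux_marginal_subadd h hmono hsub A T) (hP T hT)
  refine step1.trans_eq ?_
  have expand : ∑ T ∈ G.powerset, ((∏ e ∈ T, x e) * ∏ e ∈ G \ T, (1 - x e)) *
          (h A + ∑ e ∈ T, (h ({e} ∪ A) - h A))
      = (∑ T ∈ G.powerset, (∏ e ∈ T, x e) * ∏ e ∈ G \ T, (1 - x e)) * h A
        + ∑ T ∈ G.powerset, ((∏ e ∈ T, x e) * ∏ e ∈ G \ T, (1 - x e)) *
            (∑ e ∈ T, (h ({e} ∪ A) - h A)) := by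
    rw [Finset.sum_mul, ← Finset.sum_add_distrib]
    exact Finset.sum_congr rfl fun T _ => by ring
  rw [expand, aux_prodsum_one, aux_expect_linear x (fun e => h ({e} ∪ A) - h A) G]
  simp only [mul_sub]
  rw [Finset.sum_sub_distrib, ← Finset.sum_mul]
  ring

lemma aux_powerset_split (A B : Finset N) (hAB : Disjoint A B) (q : Finset N → ℝ) :
    ∑ U ∈ (A ∪ B).powerset, q U = ∑ T ∈ A.powerset, ∑ V ∈ B.powerset, q (T ∪ V) := by
  have h1 : ∑ U ∈ (A ∪ B).powerset, q U
      = ∑ p ∈ A.powerset ×ˢ B.powerset, q (p.1 ∪ p.2) := by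
    refine Finset.sum_nbij' (fun U => (U ∩ A, U ∩ B)) (fun p => p.1 ∪ p.2) ?_ ?_ ?_ ?_ ?_
    · intro U hU
      simp only [Finset.mem_product, Finset.mem_powerset]
      exact ⟨Finset.inter_subset_right, Finset.inter_subset_right⟩
    · intro p hp
      simp only [Finset.mem_product, Finset.mem_powerset] at hp
      rw [Finset.mem_powerset]
      exact Finset.union_subset_union hp.1 hp.2
    · intro U hU
      rw [Finset.mem_powerset] at hU
      show U ∩ A ∪ U ∩ B = U
      rw [← Finset.inter_union_distrib_left, Finset.inter_eq_left.mpr hU]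
    · intro p hp
      simp only [Finset.mem_product, Finset.mem_powerset] at hp
      have e2 : p.2 ∩ A = ∅ := by
        apply Finset.eq_empty_of_forall_notMem
        intro e he
        rw [Finset.mem_inter] at he
        exact (Finset.disjoint_left.mp hAB) he.2 (hp.2 he.1)
      have e1 : p.1 ∩ B = ∅ := by
        apply Finset.eq_empty_of_forall_notMem
        intro e he
        rw [Finset.mem_inter] at he
        exact (Finset.disjoint_left.mp hAB) (hp.1 he.1) he.2
      have hA1 : (p.1 ∪ p.2) ∩ A = p.1 := by
        rw [Finset.union_inter_distrib_right, e2, Finset.inter_eq_left.mpr hp.1,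
          Finset.union_empty]
      have hB1 : (p.1 ∪ p.2) ∩ B = p.2 := by
        rw [Finset.union_inter_distrib_right, e1, Finset.inter_eq_left.mpr hp.2,
          Finset.empty_union]
      show ((p.1 ∪ p.2) ∩ A, (p.1 ∪ p.2) ∩ B) = p
      rw [hA1, hB1]
    · intro U hU
      rw [Finset.mem_powerset] at hU
      have huv : U ∩ A ∪ U ∩ B = U := by
        rw [← Finset.inter_union_distrib_left, Finset.inter_eq_left.mpr hU]
      show q U = q (U ∩ A ∪ U ∩ B)
      rw [huv]
  rw [h1, Finset.sum_product]

lemma aux_prod_partition {ι : Type*} [Fintype ι] (Ng : ι → Finset N)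
    (hdisj : ∀ i j, i ≠ j → Disjoint (Ng i) (Ng j))
    (hcover : ∀ e : N, ∃ i, e ∈ Ng i)
    (f : N → ℝ) (V : Finset N) :
    ∏ e ∈ V, f e = ∏ i, ∏ e ∈ V ∩ Ng i, f e := by
  classical
  have hV : V = Finset.univ.biUnion (fun i => V ∩ Ng i) := by
    ext e
    simp only [Finset.mem_biUnion, Finset.mem_univ, true_and, Finset.mem_inter]
    constructor
    · intro he
      obtain ⟨i, hi⟩ := hcover e
      exact ⟨i, he, hi⟩
    · rintro ⟨i, he, _⟩; exact he
  nth_rewrite 1 [hV]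
  rw [Finset.prod_biUnion]
  intro i _ j _ hij
  exact Finset.disjoint_of_subset_left Finset.inter_subset_right
    (Finset.disjoint_of_subset_right Finset.inter_subset_right (hdisj i j hij))

end Aux

/-- The multilinear extension of a set function `h` on a finite ground set. -/
noncomputable def mlExt {N : Type*} [Fintype N] [DecidableEq N]
    (h : Finset N → ℝ) (x : N → ℝ) : ℝ :=
  ∑ U ∈ (Finset.univ : Finset N).powerset,
    (∏ e ∈ U, x e) * (∏ e ∈ Finset.univ \ U, (1 - x e)) * h U

open Classical in
theorem stmt19 {N ι : Type*} [Fintype N] [DecidableEq N] [Fintype ι] [DecidableEq ι]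
    (Ng : ι → Finset N)
    (hdisj : ∀ i j, i ≠ j → Disjoint (Ng i) (Ng j))
    (hcover : ∀ e : N, ∃ i, e ∈ Ng i)
    (h : Finset N → ℝ) (hnonneg : ∀ U, 0 ≤ h U)
    (hmono : ∀ U V : Finset N, U ⊆ V → h U ≤ h V)
    (hsub : ∀ U V : Finset N, h U + h V ≥ h (U ∪ V) + h (U ∩ V))
    (x : N → ℝ) (hx : ∀ e, 0 ≤ x e ∧ x e ≤ 1)
    (hgroup : ∀ i, ∑ e ∈ Ng i, x e ≤ 1)
    -- `w σ` is the probability that the independent-across-groups choices are `σ`,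
    -- where within group `i` element `e ∈ Ng i` is chosen with probability `x e`.
    (w : (ι → Option N) → ℝ)
    (hw : ∀ σ, w σ = ∏ i, (match σ i with
      | some e => if e ∈ Ng i then x e else 0
      | none => 1 - ∑ e ∈ Ng i, x e))
    (R : (ι → Option N) → Finset N)
    (hR : ∀ σ, R σ = Finset.univ.filter (fun e => ∃ i, σ i = some e)) :
    ∑ σ : ι → Option N, w σ * h (R σ) ≥ mlExt h x := by
  -- weight functions
  set wP : ι → Finset N → ℝ :=
    fun i T => (∏ e ∈ T, x e) * ∏ e ∈ Ng i \ T, (1 - x e) with hwP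
  set wD : ι → Finset N → ℝ :=
    fun i T => (if T = ∅ then 1 - ∑ e ∈ Ng i, x e else 0)
      + ∑ e ∈ Ng i, (if T = {e} then x e else 0) with hwD
  set F : Finset ι → ℝ := fun s =>
    ∑ U ∈ (Finset.univ : Finset N).powerset,
      (∏ i, (if i ∈ s then wP i (U ∩ Ng i) else wD i (U ∩ Ng i))) * h U with hF
  -- nonnegativity of weights
  have hwPnn : ∀ i T, 0 ≤ wP i T := by
    intro i T
    exact mul_nonneg (Finset.prod_nonneg fun e _ => (hx e).1)
      (Finset.prod_nonneg fun e _ => by linarith [(hx e).2])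
  have hwDnn : ∀ i T, 0 ≤ wD i T := by
    intro i T
    refine add_nonneg ?_ (Finset.sum_nonneg fun e _ => ?_)
    · split
      · linarith [hgroup i]
      · exact le_rfl
    · split
      · exact (hx e).1
      · exact le_rfl
  -- Claim A : F univ = mlExt h x
  have claimA : F Finset.univ = mlExt h x := by
    rw [hF, mlExt]
    refine Finset.sum_congr rfl fun U hU => ?_
    congr 1
    simp only [Finset.mem_univ, if_true]
    have h1 : ∀ i, Ng i \ (U ∩ Ng i) = (Finset.univ \ U) ∩ Ng i := by
      intro i; ext e
      simp only [Finset.mem_sdiff, Finset.mem_inter, Finset.mem_univ, true_and]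
      tauto
    have h2 : ∀ i, wP i (U ∩ Ng i)
        = (∏ e ∈ U ∩ Ng i, x e) * ∏ e ∈ (Finset.univ \ U) ∩ Ng i, (1 - x e) := by
      intro i; rw [hwP]; simp only; rw [h1 i]
    rw [Finset.prod_congr rfl fun i _ => h2 i, Finset.prod_mul_distrib,
      ← aux_prod_partition Ng hdisj hcover x U,
      ← aux_prod_partition Ng hdisj hcover (fun e => 1 - x e) (Finset.univ \ U)]
  -- Claim B : F ∅ = LHS
  have claimB : F ∅ = ∑ σ : ι → Option N, w σ * h (R σ) := by
    set Good : (ι → Option N) → Prop := fun σ => ∀ i e, σ i = some e → e ∈ Ng i with hGood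
    set GoodU : Finset N → Prop := fun U => ∀ i, U ∩ Ng i = ∅ ∨ ∃ e, U ∩ Ng i = {e} with hGoodU
    -- bad σ have zero weight
    have hbadσ : ∀ σ : ι → Option N, ¬ Good σ → w σ = 0 := by
      intro σ hbad
      simp only [hGood, not_forall, Classical.not_imp] at hbad
      obtain ⟨i, e, hie, hen⟩ := hbad
      rw [hw]
      refine Finset.prod_eq_zero (Finset.mem_univ i) ?_
      simp only [hie, if_neg hen]
    -- bad U have zero weight
    have hbadU : ∀ U : Finset N, ¬ GoodU U → (∏ i, wD i (U ∩ Ng i)) = 0 := by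
      intro U hbad
      simp only [hGoodU, not_forall, not_or, not_exists] at hbad
      obtain ⟨i, h1, h2⟩ := hbad
      refine Finset.prod_eq_zero (Finset.mem_univ i) ?_
      rw [hwD]
      simp only
      rw [if_neg h1, Finset.sum_eq_zero fun e _ => if_neg (h2 e), add_zero]
    -- reduce both sides to filtered sums
    have hred1 : ∑ σ : ι → Option N, w σ * h (R σ)
        = ∑ σ ∈ Finset.univ.filter Good, w σ * h (R σ) := by
      have hz : ∑ σ ∈ Finset.univ.filter (fun σ => ¬ Good σ), w σ * h (R σ) = 0 :=
        Finset.sum_eq_zero fun σ hσ => by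
          rw [hbadσ σ (Finset.mem_filter.mp hσ).2, zero_mul]
      rw [← Finset.sum_filter_add_sum_filter_not Finset.univ Good (fun σ => w σ * h (R σ)),
        hz, add_zero]
    have hred2 : F ∅ = ∑ U ∈ Finset.univ.powerset.filter GoodU,
        (∏ i, wD i (U ∩ Ng i)) * h U := by
      rw [hF]
      simp only [Finset.notMem_empty, if_false]
      have hz : ∑ U ∈ Finset.univ.powerset.filter (fun U => ¬ GoodU U),
          (∏ i, wD i (U ∩ Ng i)) * h U = 0 :=
        Finset.sum_eq_zero fun U hU => by
          rw [hbadU U (Finset.mem_filter.mp hU).2, zero_mul]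
      rw [← Finset.sum_filter_add_sum_filter_not Finset.univ.powerset GoodU
        (fun U => (∏ i, wD i (U ∩ Ng i)) * h U), hz, add_zero]
    -- key membership characterization
    have hRmem : ∀ σ, Good σ → ∀ i f, (f ∈ R σ ∩ Ng i ↔ σ i = some f) := by
      intro σ hg i f
      rw [hR]
      simp only [Finset.mem_inter, Finset.mem_filter, Finset.mem_univ, true_and]
      constructor
      · rintro ⟨⟨j, hj⟩, hfN⟩
        have hfj : f ∈ Ng j := hg j f hj
        by_cases hji : j = i
        · rw [← hji]; exact hj
        · exact absurd hfN (Finset.disjoint_left.mp (hdisj j i hji) hfj)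
      · intro hi
        exact ⟨⟨i, hi⟩, hg i f hi⟩
    have hRcap : ∀ σ, Good σ → ∀ i, R σ ∩ Ng i
        = (match σ i with | none => (∅ : Finset N) | some e => {e}) := by
      intro σ hg i
      cases hσi : σ i with
      | none =>
        refine Finset.eq_empty_of_forall_notMem fun f hf => ?_
        rw [hRmem σ hg i f, hσi] at hf
        simp at hf
      | some e =>
        ext f
        rw [hRmem σ hg i f, hσi, Finset.mem_singleton]
        constructor
        · intro hh; exact (Option.some_inj.mp hh).symm
        · intro hh; rw [hh]
    -- the inverse map
    set inv : Finset N → (ι → Option N) := fun U i =>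
      if hne : (U ∩ Ng i).Nonempty then some hne.choose else none with hinv
    have hinvGood : ∀ U : Finset N, Good (inv U) := by
      intro U
      rw [hGood]
      intro i e hie
      rw [hinv] at hie
      simp only at hie
      by_cases hne : (U ∩ Ng i).Nonempty
      · rw [dif_pos hne] at hie
        have hc := hne.choose_spec
        rw [Option.some_inj.mp hie] at hc
        exact (Finset.mem_inter.mp hc).2
      · rw [dif_neg hne] at hie
        simp at hie
    have hRinv : ∀ U : Finset N, GoodU U → R (inv U) = U := by
      intro U hgU
      rw [hR]
      ext f
      simp only [Finset.mem_filter, Finset.mem_univ, true_and]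
      constructor
      · rintro ⟨i, hi⟩
        rw [hinv] at hi
        simp only at hi
        by_cases hne : (U ∩ Ng i).Nonempty
        · rw [dif_pos hne] at hi
          have hc := hne.choose_spec
          rw [Option.some_inj.mp hi] at hc
          exact (Finset.mem_inter.mp hc).1
        · rw [dif_neg hne] at hi
          exact absurd hi (by simp)
      · intro hf
        obtain ⟨i, hiN⟩ := hcover f
        have hfi : f ∈ U ∩ Ng i := Finset.mem_inter.mpr ⟨hf, hiN⟩
        have hsing : U ∩ Ng i = {f} := by
          rcases hgU i with hh | ⟨e, hh⟩
          · rw [hh] at hfi; exact absurd hfi (Finset.notMem_empty f)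
          · rw [hh] at hfi ⊢
            rw [Finset.mem_singleton.mp hfi]
        refine ⟨i, ?_⟩
        rw [hinv]
        simp only
        have hne : (U ∩ Ng i).Nonempty := ⟨f, hfi⟩
        rw [dif_pos hne]
        have hc : hne.choose ∈ ({f} : Finset N) := by
          rw [← hsing]; exact hne.choose_spec
        rw [Finset.mem_singleton.mp hc]
    have hinvR : ∀ σ : ι → Option N, Good σ → inv (R σ) = σ := by
      intro σ hg
      funext i
      rw [hinv]
      simp only
      cases hσi : σ i with
      | none =>
        have hcap : R σ ∩ Ng i = ∅ := by rw [hRcap σ hg i, hσi]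
        rw [dif_neg (by rw [hcap]; exact Finset.not_nonempty_empty)]
      | some e =>
        have hcap : R σ ∩ Ng i = {e} := by rw [hRcap σ hg i, hσi]
        have hne : (R σ ∩ Ng i).Nonempty := by
          rw [hcap]; exact ⟨e, Finset.mem_singleton_self e⟩
        rw [dif_pos hne]
        have hc : hne.choose ∈ ({e} : Finset N) := by
          rw [← hcap]; exact hne.choose_spec
        rw [Finset.mem_singleton.mp hc]
    have hweight : ∀ σ : ι → Option N, Good σ → w σ = ∏ i, wD i (R σ ∩ Ng i) := by
      intro σ hg
      rw [hw]
      refine Finset.prod_congr rfl fun i _ => ?_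
      rw [hRcap σ hg i, hwD]
      simp only
      cases hσi : σ i with
      | none =>
        simp only [hσi]
        rw [if_true, Finset.sum_eq_zero fun e _ =>
          if_neg (fun hh => (Finset.singleton_ne_empty e) hh.symm), add_zero]
      | some e =>
        have heN : e ∈ Ng i := hg i e hσi
        simp only [hσi, if_pos heN]
        rw [if_neg (Finset.singleton_ne_empty e)]
        have hterm : ∀ e' ∈ Ng i, (if ({e} : Finset N) = {e'} then x e' else 0)
            = (if e = e' then x e' else 0) := by
          intro e' _
          by_cases hee : e = e'
          · rw [if_pos hee, if_pos (by rw [hee])]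
          · rw [if_neg hee, if_neg (fun hh => hee (Finset.singleton_injective hh))]
        rw [Finset.sum_congr rfl hterm, Finset.sum_ite_eq (Ng i) e x, if_pos heN, zero_add]
    rw [hred1, hred2]
    refine Finset.sum_nbij' (fun U => inv U) (fun σ => R σ) ?_ ?_ ?_ ?_ ?_
    · -- inv U ∈ filter Good
      intro U _
      exact Finset.mem_filter.mpr ⟨Finset.mem_univ _, hinvGood U⟩
    · -- R σ ∈ filter GoodU
      intro σ hσ
      rw [Finset.mem_filter] at hσ ⊢
      have hg := hσ.2
      refine ⟨Finset.mem_powerset.mpr (Finset.subset_univ _), ?_⟩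
      rw [hGoodU]
      intro i
      rw [hRcap σ hg i]
      cases σ i with
      | none => exact Or.inl rfl
      | some e => exact Or.inr ⟨e, rfl⟩
    · -- R (inv U) = U
      intro U hU
      exact hRinv U (Finset.mem_filter.mp hU).2
    · -- inv (R σ) = σ
      intro σ hσ
      exact hinvR σ (Finset.mem_filter.mp hσ).2
    · -- weights agree
      intro U hU
      have hgU := (Finset.mem_filter.mp hU).2
      have h1 : R (inv U) = U := hRinv U hgU
      rw [hweight (inv U) (hinvGood U), h1]  -- Claim C : step
  have hwDsum : ∀ (i : ι) (V : Finset N),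
      ∑ T ∈ (Ng i).powerset, wD i T * h (T ∪ V)
        = (1 - ∑ e ∈ Ng i, x e) * h V + ∑ e ∈ Ng i, x e * h ({e} ∪ V) := by
    intro i V
    have expand : ∀ T ∈ (Ng i).powerset, wD i T * h (T ∪ V)
        = (if T = ∅ then (1 - ∑ e ∈ Ng i, x e) * h (T ∪ V) else 0)
          + ∑ e ∈ Ng i, (if T = {e} then x e * h (T ∪ V) else 0) := by
      intro T _
      rw [hwD]; simp only
      rw [add_mul, Finset.sum_mul]
      congr 1
      · split <;> simp
      · exact Finset.sum_congr rfl fun e _ => by split <;> simp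
    rw [Finset.sum_congr rfl expand, Finset.sum_add_distrib]
    congr 1
    · rw [Finset.sum_ite_eq' (Ng i).powerset (∅ : Finset N)
        (fun T => (1 - ∑ e ∈ Ng i, x e) * h (T ∪ V))]
      rw [if_pos (Finset.empty_mem_powerset _), Finset.empty_union]
    · rw [Finset.sum_comm]
      refine Finset.sum_congr rfl fun e he => ?_
      rw [Finset.sum_ite_eq' (Ng i).powerset ({e} : Finset N)
        (fun T => x e * h (T ∪ V))]
      rw [if_pos (Finset.mem_powerset.mpr (Finset.singleton_subset_iff.mpr he))]
  have claimC : ∀ (i : ι) (s : Finset ι), i ∉ s → F (insert i s) ≤ F s := by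
    intro i s his
    rw [hF]
    simp only
    have huniv : (Finset.univ : Finset N) = Ng i ∪ (Finset.univ \ Ng i) :=
      (Finset.union_sdiff_of_subset (Finset.subset_univ _)).symm
    rw [huniv, aux_powerset_split _ _ Finset.disjoint_sdiff, aux_powerset_split _ _ Finset.disjoint_sdiff,
      Finset.sum_comm, @Finset.sum_comm _ _ _ _ _ _ (fun T V => (∏ j, (if j ∈ s then wP j ((T ∪ V) ∩ Ng j) else wD j ((T ∪ V) ∩ Ng j))) * h (T ∪ V))]
    refine Finset.sum_le_sum fun V hV => ?_
    rw [Finset.mem_powerset] at hV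
    have hVd : ∀ e ∈ V, e ∉ Ng i := fun e he => (Finset.mem_sdiff.mp (hV he)).2
    set C : ℝ := ∏ j ∈ Finset.univ.erase i,
      (if j ∈ s then wP j (V ∩ Ng j) else wD j (V ∩ Ng j)) with hC
    have hCnn : 0 ≤ C := Finset.prod_nonneg fun j _ => by
      split
      · exact hwPnn _ _
      · exact hwDnn _ _
    have hcap1 : ∀ T ∈ (Ng i).powerset, (T ∪ V) ∩ Ng i = T := by
      intro T hT
      rw [Finset.mem_powerset] at hT
      ext e
      simp only [Finset.mem_inter, Finset.mem_union]
      constructor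
      · rintro ⟨he | he, hN⟩
        · exact he
        · exact absurd hN (hVd e he)
      · intro he; exact ⟨Or.inl he, hT he⟩
    have hcap2 : ∀ T ∈ (Ng i).powerset, ∀ j, j ≠ i → (T ∪ V) ∩ Ng j = V ∩ Ng j := by
      intro T hT j hji
      rw [Finset.mem_powerset] at hT
      ext e
      simp only [Finset.mem_inter, Finset.mem_union]
      constructor
      · rintro ⟨he | he, hN⟩
        · exact absurd hN (Finset.disjoint_left.mp (hdisj i j (fun hh => hji hh.symm)) (hT he))
        · exact ⟨he, hN⟩
      · rintro ⟨he, hN⟩; exact ⟨Or.inr he, hN⟩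
    have hfactor : ∀ (s' : Finset ι) (X : ι → Finset N → ℝ), ∀ T ∈ (Ng i).powerset,
        (∏ j, (if j ∈ s' then wP j ((T ∪ V) ∩ Ng j) else wD j ((T ∪ V) ∩ Ng j)))
          = (if i ∈ s' then wP i T else wD i T)
            * ∏ j ∈ Finset.univ.erase i,
                (if j ∈ s' then wP j (V ∩ Ng j) else wD j (V ∩ Ng j)) := by
      intro s' _ T hT
      rw [← Finset.mul_prod_erase Finset.univ _ (Finset.mem_univ i), hcap1 T hT]
      congr 1
      refine Finset.prod_congr rfl fun j hj => ?_
      rw [hcap2 T hT j (Finset.mem_erase.mp hj).1]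
    have lhs_eq : ∀ (s' : Finset ι),
        ∑ T ∈ (Ng i).powerset,
          (∏ j, (if j ∈ s' then wP j ((T ∪ V) ∩ Ng j) else wD j ((T ∪ V) ∩ Ng j))) * h (T ∪ V)
        = (∏ j ∈ Finset.univ.erase i, (if j ∈ s' then wP j (V ∩ Ng j) else wD j (V ∩ Ng j)))
          * ∑ T ∈ (Ng i).powerset, (if i ∈ s' then wP i T else wD i T) * h (T ∪ V) := by
      intro s'
      rw [Finset.mul_sum]
      refine Finset.sum_congr rfl fun T hT => ?_
      rw [hfactor s' wP T hT]
      ring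
    rw [lhs_eq, lhs_eq]
    have herase : ∀ j ∈ Finset.univ.erase i,
        (if j ∈ insert i s then wP j (V ∩ Ng j) else wD j (V ∩ Ng j))
          = (if j ∈ s then wP j (V ∩ Ng j) else wD j (V ∩ Ng j)) := by
      intro j hj
      have hji : j ≠ i := (Finset.mem_erase.mp hj).1
      simp [Finset.mem_insert, hji]
    rw [Finset.prod_congr rfl herase]
    refine mul_le_mul_of_nonneg_left ?_ hCnn
    have hl : ∀ T ∈ (Ng i).powerset,
        (if i ∈ insert i s then wP i T else wD i T) * h (T ∪ V) = wP i T * h (T ∪ V) :=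
      fun T _ => by rw [if_pos (Finset.mem_insert_self i s)]
    have hr : ∀ T ∈ (Ng i).powerset,
        (if i ∈ s then wP i T else wD i T) * h (T ∪ V) = wD i T * h (T ∪ V) :=
      fun T _ => by rw [if_neg his]
    rw [Finset.sum_congr rfl hl, Finset.sum_congr rfl hr, hwDsum i V]
    have := aux_key h hmono hsub x hx (Ng i) V
    rw [hwP]
    exact this
  -- conclude
  have hmain : ∀ s : Finset ι, F s ≤ F ∅ := by
    intro s
    induction s using Finset.induction_on with
    | empty => exact le_refl _
    | @insert i s hi ih => exact (claimC i s hi).trans ih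
  rw [← claimB, ← claimA]
  exact hmain Finset.univ
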